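/- Let q ≥ 2 be an integer and (q_k) integers with 2 ≤ q_k ≤ q. Define f on digit sequences by sending x = Σ_{k≥1} (−1)^k ε_k/(q_1⋯q_k) (ε_k ∈ {0,...,q_k−1}) to f(x) = Σ_{k≥1} ε_k/(−q)^k. Then f is strictly increasing: if two digit sequences (α_k), (ε_k) satisfy Σ (−1)^k α_k/(q_1⋯q_k) < Σ (−1)^k ε_k/(q_1⋯q_k), then Σ α_k/(−q)^k < Σ ε_k/(−q)^k. -/

import Mathlib

/-- The denominator `q 0 * q 1 * ⋯ * q n` of the `n`-th term (0-indexed) of a Cantor series. -/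
noncomputable def cden (q : ℕ → ℕ) (n : ℕ) : ℝ := ∏ i ∈ Finset.range (n + 1), (q i : ℝ)

/-- The alternating Cantor series value `Σ_{k≥1} (−1)^k ε_k/(q_1⋯q_k)` of a digit sequence. -/
noncomputable def altVal (q : ℕ → ℕ) (e : ℕ → ℕ) : ℝ :=
  ∑' k : ℕ, (-1 : ℝ) ^ (k + 1) * (e k : ℝ) / cden q k

/-- The nega-q value `Σ_{k≥1} ε_k/(−q)^k` of a digit sequence. -/
noncomputable def negVal (q0 : ℕ) (e : ℕ → ℕ) : ℝ :=
  ∑' k : ℕ, (e k : ℝ) / (-(q0 : ℝ)) ^ (k + 1)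

/-- A digit sequence is of the excluded (non-canonical) periodic type if it ends in
`(ε_m) 0 (q_{m+2}−1) 0 (q_{m+4}−1) …`. -/
def Excluded (q e : ℕ → ℕ) : Prop :=
  ∃ m, ∀ j, e (m + 2 * j + 1) = 0 ∧ e (m + 2 * j + 2) = q (m + 2 * j + 2) - 1

lemma cden_pos {q : ℕ → ℕ} (hq2 : ∀ k, 2 ≤ q k) (n : ℕ) : 0 < cden q n := by
  apply Finset.prod_pos
  intro i _
  have : (2:ℝ) ≤ (q i : ℝ) := by exact_mod_cast hq2 i
  linarith

lemma cden_ge {q : ℕ → ℕ} (hq2 : ∀ k, 2 ≤ q k) (n : ℕ) : (2:ℝ)^(n+1) ≤ cden q n := by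
  calc (2:ℝ)^(n+1) = ∏ _i ∈ Finset.range (n+1), (2:ℝ) := by
        rw [Finset.prod_const, Finset.card_range]
    _ ≤ ∏ i ∈ Finset.range (n+1), (q i : ℝ) :=
        Finset.prod_le_prod (fun i _ => by norm_num) (fun i _ => by exact_mod_cast hq2 i)

lemma cden_succ (q : ℕ → ℕ) (n : ℕ) : cden q (n+1) = cden q n * q (n+1) := by
  simp [cden, Finset.prod_range_succ]

lemma summable_of_le_geo {f : ℕ → ℝ} (C : ℝ) (h : ∀ k, |f k| ≤ C * (1/2)^(k+1)) : Summable f := by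
  have hg : Summable (fun k : ℕ => C * (1/2:ℝ)^(k+1)) := by
    have : Summable (fun k : ℕ => (1/2:ℝ)^k) :=
      summable_geometric_of_lt_one (by norm_num) (by norm_num)
    have := (this.mul_left (C * (1/2)))
    apply this.congr
    intro k
    rw [pow_succ]
    ring
  exact Summable.of_norm_bounded hg (by simpa [Real.norm_eq_abs] using h)

lemma summable_div_cden {q : ℕ → ℕ} (hq2 : ∀ k, 2 ≤ q k) {f : ℕ → ℝ} {C : ℝ}
    (hC : ∀ k, |f k| ≤ C) : Summable (fun k => f k / cden q k) := by
  apply summable_of_le_geo C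
  intro k
  have hc := cden_pos hq2 k
  have hcg := cden_ge hq2 k
  have h2 : (0:ℝ) < 2^(k+1) := by positivity
  have hC0 : 0 ≤ C := le_trans (abs_nonneg _) (hC k)
  rw [abs_div, abs_of_pos hc]
  calc |f k| / cden q k ≤ C / 2^(k+1) := div_le_div₀ hC0 (hC k) h2 hcg
    _ = C * (1/2)^(k+1) := by rw [div_pow, one_pow]; ring

lemma summable_div_pow {q0 : ℕ} (hq0 : 2 ≤ q0) {f : ℕ → ℝ} {C : ℝ}
    (hC : ∀ k, |f k| ≤ C) (d : ℕ → ℝ) (hd : ∀ k, |d k| = (q0:ℝ)^(k+1)) :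
    Summable (fun k => f k / d k) := by
  apply summable_of_le_geo C
  intro k
  have hq0R : (2:ℝ) ≤ (q0:ℝ) := by exact_mod_cast hq0
  have h2 : (0:ℝ) < 2^(k+1) := by positivity
  have hdk : (2:ℝ)^(k+1) ≤ |d k| := by
    rw [hd k]; exact pow_le_pow_left₀ (by norm_num) hq0R _
  have hC0 : 0 ≤ C := le_trans (abs_nonneg _) (hC k)
  rw [abs_div]
  calc |f k| / |d k| ≤ C / 2^(k+1) := div_le_div₀ hC0 (hC k) h2 hdk
    _ = C * (1/2)^(k+1) := by rw [div_pow, one_pow]; ring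

lemma cden_tele {q : ℕ → ℕ} (hq2 : ∀ k, 2 ≤ q k) (n N : ℕ) :
    ∑ i ∈ Finset.range N, ((q (i + (n+1)) : ℝ) - 1) / cden q (i + (n+1))
      = 1 / cden q n - 1 / cden q (n + N) := by
  induction N with
  | zero => simp
  | succ N ih =>
    rw [Finset.sum_range_succ, ih]
    have h1 : N + (n+1) = (n + N) + 1 := by omega
    have h2 : n + (N+1) = (n + N) + 1 := by omega
    rw [h1, h2, cden_succ]
    have hc := cden_pos hq2 (n + N)
    have hQ : (2:ℝ) ≤ (q ((n+N)+1) : ℝ) := by exact_mod_cast hq2 _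
    have hQ0 : (q ((n+N)+1) : ℝ) ≠ 0 := by linarith
    field_simp
    ring


/-- with bases `2 ≤ q_k ≤ q` and canonical digit sequences, the map
`f : Σ (−1)^k ε_k/(q_1⋯q_k) ↦ Σ ε_k/(−q)^k` is strictly increasing. -/
theorem stmt7 (q0 : ℕ) (q : ℕ → ℕ) (hq2 : ∀ k, 2 ≤ q k) (hqq : ∀ k, q k ≤ q0)
    (a e : ℕ → ℕ) (ha : ∀ k, a k < q k) (he : ∀ k, e k < q k)
    (hca : ¬ Excluded q a) (hce : ¬ Excluded q e)
    (hlt : altVal q a < altVal q e) :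
    negVal q0 a < negVal q0 e := by
  have hq0N : 2 ≤ q0 := le_trans (hq2 0) (hqq 0)
  have hq0R : (2:ℝ) ≤ (q0:ℝ) := by exact_mod_cast hq0N
  have hq0pos : (0:ℝ) < q0 := by linarith
  set D : ℕ → ℝ := fun k => (e k : ℝ) - (a k : ℝ) with hDdef
  have haR : ∀ k, (a k : ℝ) ≤ (q k : ℝ) - 1 := by
    intro k
    have : (a k : ℝ) + 1 ≤ (q k : ℝ) := by exact_mod_cast ha k
    linarith
  have heR : ∀ k, (e k : ℝ) ≤ (q k : ℝ) - 1 := by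
    intro k
    have : (e k : ℝ) + 1 ≤ (q k : ℝ) := by exact_mod_cast he k
    linarith
  have hqR : ∀ k, (q k : ℝ) ≤ (q0:ℝ) := fun k => by exact_mod_cast hqq k
  have hDb : ∀ k, |D k| ≤ (q k : ℝ) - 1 := by
    intro k
    rw [abs_le]
    constructor
    · have h1 : (0:ℝ) ≤ (e k : ℝ) := Nat.cast_nonneg _
      have := haR k
      simp only [hDdef]
      linarith
    · have := heR k; have h0 : (0:ℝ) ≤ (a k : ℝ) := Nat.cast_nonneg _
      simp only [hDdef]; linarith
  have hDb0 : ∀ k, |D k| ≤ (q0:ℝ) := by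
    intro k; have := hDb k; have := hqR k; linarith
  -- term series
  set g : ℕ → ℝ := fun k => ((-1:ℝ)^(k+1) * D k) / cden q k with hgdef
  set hh : ℕ → ℝ := fun k => ((-1:ℝ)^(k+1) * D k) / ((q0:ℝ))^(k+1) with hhdef
  have habs_neg_one : ∀ (c : ℝ) (k : ℕ), |(-1:ℝ)^(k+1) * c| = |c| := by
    intro c k
    rw [abs_mul, abs_pow, abs_neg, abs_one, one_pow, one_mul]
  have hnum_bound : ∀ k, |(-1:ℝ)^(k+1) * D k| ≤ (q0:ℝ) := by
    intro k; rw [habs_neg_one]; exact hDb0 k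
  have hgsum : Summable g := summable_div_cden hq2 hnum_bound
  have hhsum : Summable hh :=
    summable_div_pow hq0N hnum_bound _ (fun k => by
      rw [abs_pow, abs_of_pos hq0pos])
  have hsa : Summable (fun k => (-1:ℝ)^(k+1) * (a k : ℝ) / cden q k) :=
    summable_div_cden hq2 (C := (q0:ℝ)) (fun k => by
      rw [habs_neg_one, abs_of_nonneg (Nat.cast_nonneg _)]
      have := haR k; have := hqR k; linarith)
  have hse : Summable (fun k => (-1:ℝ)^(k+1) * (e k : ℝ) / cden q k) :=
    summable_div_cden hq2 (C := (q0:ℝ)) (fun k => by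
      rw [habs_neg_one, abs_of_nonneg (Nat.cast_nonneg _)]
      have := heR k; have := hqR k; linarith)
  have hnd : ∀ k : ℕ, |(-(q0:ℝ))^(k+1)| = (q0:ℝ)^(k+1) := fun k => by
    rw [abs_pow, abs_neg, abs_of_pos hq0pos]
  have hna : Summable (fun k => (a k : ℝ) / (-(q0:ℝ))^(k+1)) :=
    summable_div_pow hq0N (C := (q0:ℝ)) (fun k => by
      rw [abs_of_nonneg (Nat.cast_nonneg _)]
      have := haR k; have := hqR k; linarith) _ hnd
  have hne' : Summable (fun k => (e k : ℝ) / (-(q0:ℝ))^(k+1)) :=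
    summable_div_pow hq0N (C := (q0:ℝ)) (fun k => by
      rw [abs_of_nonneg (Nat.cast_nonneg _)]
      have := heR k; have := hqR k; linarith) _ hnd
  -- difference identities
  have hgalt : altVal q e - altVal q a = ∑' k, g k := by
    rw [altVal, altVal, ← Summable.tsum_sub hse hsa]
    apply tsum_congr
    intro k
    simp only [hgdef, hDdef]
    ring
  have hnval : negVal q0 e - negVal q0 a = ∑' k, hh k := by
    rw [negVal, negVal, ← Summable.tsum_sub hne' hna]
    apply tsum_congr
    intro k
    simp only [hhdef, hDdef]
    rcases Nat.even_or_odd (k+1) with hk | hk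
    · rw [hk.neg_pow, hk.neg_one_pow]; ring
    · rw [hk.neg_pow, hk.neg_one_pow]; field_simp; ring
  -- first index where the digits differ
  have hexists : ∃ k, a k ≠ e k := by
    by_contra hcon
    push_neg at hcon
    have heqv : altVal q a = altVal q e := by
      unfold altVal; exact tsum_congr (fun k => by rw [hcon k])
    rw [heqv] at hlt
    exact lt_irrefl _ hlt
  set n := Nat.find hexists with hn_def
  have hne : a n ≠ e n := Nat.find_spec hexists
  have hmin : ∀ k, k < n → a k = e k := fun k hk =>
    not_ne_iff.mp (Nat.find_min hexists hk)
  have hD0 : ∀ k, k < n → D k = 0 := by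
    intro k hk; simp only [hDdef, hmin k hk, sub_self]
  -- splitting the sums at n
  have hheadg : ∑ i ∈ Finset.range (n+1), g i = g n := by
    rw [Finset.sum_range_succ, Finset.sum_eq_zero, zero_add]
    intro i hi
    simp only [hgdef, hD0 i (Finset.mem_range.mp hi), mul_zero, zero_div]
  have hheadh : ∑ i ∈ Finset.range (n+1), hh i = hh n := by
    rw [Finset.sum_range_succ, Finset.sum_eq_zero, zero_add]
    intro i hi
    simp only [hhdef, hD0 i (Finset.mem_range.mp hi), mul_zero, zero_div]
  have hsplitg := Summable.sum_add_tsum_nat_add (f := g) (n+1) hgsum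
  have hsplith := Summable.sum_add_tsum_nat_add (f := hh) (n+1) hhsum
  rw [hheadg] at hsplitg
  rw [hheadh] at hsplith
  -- tail bound for g
  have hTgs : Summable (fun i => g (i + (n+1))) := (summable_nat_add_iff (n+1)).mpr hgsum
  have hTgabs : Summable (fun i => |g (i + (n+1))|) := hTgs.abs
  have hgabs_le : ∀ k, |g k| ≤ ((q k : ℝ) - 1) / cden q k := by
    intro k
    have hc := cden_pos hq2 k
    rw [hgdef]
    simp only
    rw [abs_div, abs_of_pos hc, habs_neg_one]
    exact div_le_div_of_nonneg_right (hDb k) hc.le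
  have hTgle : (∑' i, g (i + (n+1))) ≤ 1 / cden q n := by
    have h1 : (∑' i, g (i + (n+1))) ≤ ∑' i, |g (i + (n+1))| := by
      apply Summable.tsum_le_tsum (fun i => le_abs_self _) hTgs hTgabs
    refine le_trans h1 ?_
    apply Real.tsum_le_of_sum_range_le (fun i => abs_nonneg _)
    intro N
    calc ∑ i ∈ Finset.range N, |g (i + (n+1))|
        ≤ ∑ i ∈ Finset.range N, ((q (i + (n+1)) : ℝ) - 1) / cden q (i + (n+1)) :=
          Finset.sum_le_sum (fun i _ => hgabs_le _)
      _ = 1 / cden q n - 1 / cden q (n + N) := cden_tele hq2 n N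
      _ ≤ 1 / cden q n := by
          have hc := cden_pos hq2 (n + N)
          have : 0 ≤ 1 / cden q (n + N) := by positivity
          linarith
  -- Part A : the leading signed digit difference is ≥ 1
  set s : ℝ := (-1:ℝ)^(n+1) * D n with hs_def
  have hs_abs : 1 ≤ |s| := by
    rw [hs_def, habs_neg_one]
    rcases Nat.lt_or_ge (a n) (e n) with h | h
    · have : (a n : ℝ) + 1 ≤ (e n : ℝ) := by exact_mod_cast h
      have h1 : 1 ≤ D n := by simp only [hDdef]; linarith
      calc (1:ℝ) ≤ D n := h1
        _ ≤ |D n| := le_abs_self _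
    · have h' : e n < a n := lt_of_le_of_ne h (fun hx => hne hx.symm)
      have : (e n : ℝ) + 1 ≤ (a n : ℝ) := by exact_mod_cast h'
      have h1 : D n ≤ -1 := by simp only [hDdef]; linarith
      calc (1:ℝ) ≤ -(D n) := by linarith
        _ ≤ |D n| := neg_le_abs _
  have hs1 : 1 ≤ s := by
    rcases le_or_gt 1 s with h | h
    · exact h
    exfalso
    have hsle : s ≤ -1 := by
      rcases abs_cases s with ⟨h1, _⟩ | ⟨h1, _⟩
      · rw [h1] at hs_abs; linarith
      · linarith [hs_abs, h1.symm.le]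
    have hΔ : 0 < altVal q e - altVal q a := sub_pos.mpr hlt
    rw [hgalt, ← hsplitg] at hΔ
    have hc := cden_pos hq2 n
    have hgn : g n = s / cden q n := rfl
    have hgnle : g n ≤ -(1 / cden q n) := by
      rw [hgn, ← neg_div]
      exact (div_le_div_iff_of_pos_right hc).mpr hsle
    linarith [hTgle]
  -- Part B
  have hThs : Summable (fun i => hh (i + (n+1))) := (summable_nat_add_iff (n+1)).mpr hhsum
  set b : ℕ → ℝ := fun i => (-((q0:ℝ) - 1)) / (q0:ℝ)^(i + (n+1) + 1) with hb_def
  have hb_eq : ∀ i, b i = ((-((q0:ℝ) - 1)) / (q0:ℝ)^(n+2)) * (1/(q0:ℝ))^i := by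
    intro i
    have hp : (q0:ℝ)^(i + (n+1) + 1) = (q0:ℝ)^(n+2) * (q0:ℝ)^i := by
      rw [← pow_add]; congr 1; omega
    rw [hb_def]
    simp only
    rw [hp, div_pow, one_pow]
    have h1 : (q0:ℝ) ≠ 0 := by linarith
    field_simp
  have hgeo : Summable (fun i : ℕ => (1/(q0:ℝ))^i) := by
    apply summable_geometric_of_lt_one (by positivity)
    rw [div_lt_one hq0pos]; linarith
  have hbsum : Summable b :=
    (hgeo.mul_left _).congr (fun i => (hb_eq i).symm)
  have hbts : ∑' i, b i = -(1 / (q0:ℝ)^(n+1)) := by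
    calc ∑' i, b i = ∑' i, ((-((q0:ℝ) - 1)) / (q0:ℝ)^(n+2)) * (1/(q0:ℝ))^i := tsum_congr hb_eq
      _ = ((-((q0:ℝ) - 1)) / (q0:ℝ)^(n+2)) * (1 - 1/(q0:ℝ))⁻¹ := by
          rw [tsum_mul_left, tsum_geometric_of_lt_one (by positivity)
            (by rw [div_lt_one hq0pos]; linarith)]
      _ = -(1 / (q0:ℝ)^(n+1)) := by
          have h1 : (q0:ℝ) ≠ 0 := by linarith
          have h3 : (q0:ℝ) - 1 ≠ 0 := by linarith
          rw [show (1:ℝ) - 1/(q0:ℝ) = ((q0:ℝ)-1)/q0 by field_simp, inv_div]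
          have hp : (q0:ℝ)^(n+2) = (q0:ℝ)^(n+1) * q0 := by ring
          rw [hp]
          field_simp
  have hb_le : ∀ i, b i ≤ hh (i + (n+1)) := by
    intro i
    have hpow : (0:ℝ) < (q0:ℝ)^(i + (n+1) + 1) := by positivity
    have hnum : -((q0:ℝ) - 1) ≤ (-1:ℝ)^(i + (n+1) + 1) * D (i + (n+1)) := by
      have h1 := habs_neg_one (D (i + (n+1))) (i + (n+1))
      have h2 := neg_abs_le ((-1:ℝ)^(i + (n+1) + 1) * D (i + (n+1)))
      have h3 : |D (i + (n+1))| ≤ (q0:ℝ) - 1 := by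
        have := hDb (i + (n+1)); have := hqR (i + (n+1)); linarith
      rw [h1] at h2
      linarith
    exact div_le_div_of_nonneg_right hnum hpow.le
  have hhn_ge : 1 / (q0:ℝ)^(n+1) ≤ hh n := by
    have hpow : (0:ℝ) < (q0:ℝ)^(n+1) := by positivity
    have : hh n = s / (q0:ℝ)^(n+1) := rfl
    rw [this]
    exact div_le_div_of_nonneg_right hs1 hpow.le
  by_cases hex2 : ∃ i, b i < hh (i + (n+1))
  · obtain ⟨i0, hi0⟩ := hex2
    have husum : Summable (fun i => hh (i + (n+1)) - b i) := hThs.sub hbsum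
    have hupos : 0 < ∑' i, (hh (i + (n+1)) - b i) := by
      refine lt_of_lt_of_le (sub_pos.mpr hi0) ?_
      exact Summable.le_tsum husum i0 (fun j _ => sub_nonneg.mpr (hb_le j))
    have husub : ∑' i, (hh (i + (n+1)) - b i)
        = (∑' i, hh (i + (n+1))) - ∑' i, b i := Summable.tsum_sub hThs hbsum
    rw [husub, hbts] at hupos
    have hΔ' : 0 < negVal q0 e - negVal q0 a := by
      rw [hnval, ← hsplith]
      linarith [hhn_ge]
    linarith [hΔ']
  · push_neg at hex2
    exfalso
    have heqb : ∀ i, hh (i + (n+1)) = b i := fun i => le_antisymm (hex2 i) (hb_le i)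
    -- digit structure of the tails
    have hdig : ∀ k, n < k →
        (k % 2 = 0 → e k = q k - 1 ∧ a k = 0) ∧ (k % 2 = 1 → e k = 0 ∧ a k = q k - 1) := by
      intro k hk
      obtain ⟨i, rfl⟩ : ∃ i, k = i + (n+1) := ⟨k - (n+1), by omega⟩
      have h0 := heqb i
      have hpow : (0:ℝ) < (q0:ℝ)^(i + (n+1) + 1) := by positivity
      have h1 : (-1:ℝ)^(i + (n+1) + 1) * D (i + (n+1)) = -((q0:ℝ) - 1) := by
        have := congrArg (fun x : ℝ => x * (q0:ℝ)^(i + (n+1) + 1)) h0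
        simp only [hhdef, hb_def] at this
        rw [div_mul_cancel₀ _ hpow.ne', div_mul_cancel₀ _ hpow.ne'] at this
        exact this
      have haK := ha (i + (n+1))
      have heK := he (i + (n+1))
      have hqK := hqq (i + (n+1))
      have hq2K := hq2 (i + (n+1))
      rcases Nat.even_or_odd (i + (n+1)) with hK | hK
      · have hm : (-1:ℝ)^(i + (n+1) + 1) = -1 := (hK.add_one).neg_one_pow
        rw [hm] at h1
        have h2 : D (i + (n+1)) = (q0:ℝ) - 1 := by linarith
        have h3 : (e (i + (n+1)) : ℝ) + 1 = (a (i + (n+1)) : ℝ) + q0 := by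
          simp only [hDdef] at h2; linarith
        have h4 : e (i + (n+1)) + 1 = a (i + (n+1)) + q0 := by exact_mod_cast h3
        have hK2 : (i + (n+1)) % 2 = 0 := Nat.even_iff.mp hK
        exact ⟨fun _ => by omega, fun hcon => by omega⟩
      · have hm : (-1:ℝ)^(i + (n+1) + 1) = 1 := (hK.add_one).neg_one_pow
        rw [hm, one_mul] at h1
        have h3 : (a (i + (n+1)) : ℝ) = (e (i + (n+1)) : ℝ) + q0 - 1 := by
          simp only [hDdef] at h1; linarith
        have h4 : a (i + (n+1)) + 1 = e (i + (n+1)) + q0 := by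
          have : (a (i + (n+1)) : ℝ) + 1 = (e (i + (n+1)) : ℝ) + q0 := by linarith
          exact_mod_cast this
        have hK2 : (i + (n+1)) % 2 = 1 := Nat.odd_iff.mp hK
        exact ⟨fun hcon => by omega, fun _ => by omega⟩
    rcases Nat.even_or_odd n with hn | hn
    · apply hce
      refine ⟨n, fun j => ?_⟩
      have hn0 := Nat.even_iff.mp hn
      refine ⟨((hdig (n + 2*j + 1) (by omega)).2 (by omega)).1,
              ((hdig (n + 2*j + 2) (by omega)).1 (by omega)).1⟩
    · apply hca
      refine ⟨n, fun j => ?_⟩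
      have hn1 := Nat.odd_iff.mp hn
      refine ⟨((hdig (n + 2*j + 1) (by omega)).1 (by omega)).2,
              ((hdig (n + 2*j + 2) (by omega)).2 (by omega)).2⟩
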